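/- Let p be a prime and k ≥ 1 an integer, and define T'_{p,k} := { r ∈ ℚ_{>0} : |v_p(r)| = k }. Then the chromatic number of the graph G(T'_{p,k}) equals 2. -/

import Mathlib

open MeasureTheory Filter

/-- The graph `G(R)` on the positive integers where distinct `m`, `n` are adjacent
iff `m/n ∈ R` or `n/m ∈ R`. -/
def graphOf (R : Set ℚ) : SimpleGraph ℕ+ where
  Adj m n := m ≠ n ∧ (((m : ℚ) / (n : ℚ)) ∈ R ∨ ((n : ℚ) / (m : ℚ)) ∈ R)
  symm := ⟨fun _ _ h => ⟨h.1.symm, h.2.symm⟩⟩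
  loopless := ⟨fun _ h => h.1 rfl⟩

lemma val_div_pnat (p : ℕ) (hp : p.Prime) (m n : ℕ+) :
    padicValRat p ((m : ℚ) / (n : ℚ)) =
      (padicValNat p m : ℤ) - (padicValNat p n : ℤ) := by
  haveI := Fact.mk hp
  have hm : ((m : ℕ) : ℚ) ≠ 0 := by exact_mod_cast m.ne_zero
  have hn : ((n : ℕ) : ℚ) ≠ 0 := by exact_mod_cast n.ne_zero
  have : ((m : ℚ) / (n : ℚ)) = ((m : ℕ) : ℚ) / ((n : ℕ) : ℚ) := rfl
  rw [this, padicValRat.div hm hn, padicValRat.of_nat, padicValRat.of_nat]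

theorem chromatic_eq_two_nonarchimedean
    (p : ℕ) (hp : p.Prime) (k : ℕ) (hk : 1 ≤ k) :
    (graphOf {r : ℚ | 0 < r ∧ |padicValRat p r| = (k : ℤ)}).chromaticNumber = 2 := by
  haveI := Fact.mk hp
  set G := graphOf {r : ℚ | 0 < r ∧ |padicValRat p r| = (k : ℤ)} with hG
  have hk0 : k ≠ 0 := by omega
  -- adjacency implies |v m - v n| = k
  have hadj : ∀ m n : ℕ+, G.Adj m n →
      ((padicValNat p m : ℤ) - padicValNat p n = k ∨
       (padicValNat p n : ℤ) - padicValNat p m = k) := by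
    intro m n h
    rcases h.2 with h2 | h2
    · rw [Set.mem_setOf_eq, val_div_pnat p hp m n, abs_eq (by positivity)] at h2
      omega
    · rw [Set.mem_setOf_eq, val_div_pnat p hp n m, abs_eq (by positivity)] at h2
      omega
  -- a 2-coloring
  have C : G.Coloring (Fin 2) := by
    refine SimpleGraph.Coloring.mk
      (fun n => ⟨(padicValNat p n / k) % 2, Nat.mod_lt _ (by norm_num)⟩) ?_
    intro m n h hEq
    have h2 := hadj m n h
    have hEq' : (padicValNat p m / k) % 2 = (padicValNat p n / k) % 2 :=
      congrArg Fin.val hEq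
    have key : ∀ a : ℕ, ((a + k) / k) % 2 ≠ (a / k) % 2 := by
      intro a
      rw [Nat.add_div_right a (by omega)]
      omega
    rcases h2 with h2 | h2
    · have : padicValNat p m = padicValNat p n + k := by omega
      exact key (padicValNat p n) (this ▸ hEq')
    · have : padicValNat p n = padicValNat p m + k := by omega
      exact key (padicValNat p m) (this ▸ hEq'.symm)
  -- G has an edge: 1 and p^k
  have hpk : (1 : ℕ+) ≠ ⟨p ^ k, pow_pos hp.pos k⟩ := by
    intro h
    have : (1 : ℕ) = p ^ k := congrArg PNat.val h
    have := hp.one_lt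
    have := Nat.one_lt_pow hk0 hp.one_lt
    omega
  have hedge : G.Adj 1 ⟨p ^ k, pow_pos hp.pos k⟩ := by
    refine ⟨hpk, Or.inr ?_⟩
    constructor
    · have : (0:ℚ) < ((p ^ k : ℕ) : ℚ) := by exact_mod_cast pow_pos hp.pos k
      simpa using this
    · rw [val_div_pnat p hp ⟨p ^ k, pow_pos hp.pos k⟩ 1]
      simp [padicValNat.prime_pow]
  refine le_antisymm ?_ ?_
  · simpa using C.colorable.chromaticNumber_le
  · by_contra hlt
    push_neg at hlt
    have h1 : G.chromaticNumber ≤ 1 := Order.le_of_lt_add_one (by exact_mod_cast hlt)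
    rw [show ((1:ℕ∞)) = ((1:ℕ):ℕ∞) by norm_num,
      SimpleGraph.chromaticNumber_le_iff_colorable] at h1
    obtain ⟨C1⟩ := h1
    exact C1.valid hedge (Subsingleton.elim _ _)
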